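/- Let Q be a finite quiver without loops with vertices 1,…,n, let I ⊂ kQ be an admissible ideal generated by paths with canonical generating set G of minimal-length paths in I, where k is an algebraically closed field. The conditions 'π^i_{ii} = 1 for each i and π^n_{ik} = Σ_{j=1}^{n} π^j_{ij} · π^j_{jk} for all 1 ≤ i, k ≤ n' and 'every maximal vertex of each path in G is external' are equivalent. -/

import Mathlib

open CategoryTheory

universe u

namespace HWPaper

/-- A finite quiver without loops on the ordered vertex set `Fin n`. -/
structure FinQuiver (n : ℕ) where
  /-- the arrows from `i` to `j` -/
  Arr : Fin n → Fin n → Type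
  finite : ∀ i j, Finite (Arr i j)
  noLoops : ∀ i, IsEmpty (Arr i i)

variable {n : ℕ}

/-- The vertex set of a finite quiver, as a quiver. -/
def QVert (_ : FinQuiver n) : Type := Fin n

instance (Q : FinQuiver n) : Quiver (QVert Q) := ⟨fun i j => Q.Arr i j⟩

instance (Q : FinQuiver n) : LinearOrder (QVert Q) :=
  inferInstanceAs (LinearOrder (Fin n))

instance (Q : FinQuiver n) : Fintype (QVert Q) :=
  inferInstanceAs (Fintype (Fin n))

/-- The list of vertices visited by a path (including its endpoints, with multiplicity). -/
def pathVerts {Q : FinQuiver n} {i : QVert Q} :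
    ∀ {j : QVert Q}, Quiver.Path i j → List (QVert Q)
  | _, Quiver.Path.nil => [i]
  | j, Quiver.Path.cons p _ => pathVerts p ++ [j]

/-- The internal vertices of a path: all visited vertices except the two endpoints. -/
def internalVerts {Q : FinQuiver n} {i j : QVert Q} (p : Quiver.Path i j) :
    List (QVert Q) :=
  ((pathVerts p).drop 1).dropLast

/-- `Idl` is (the set of paths spanning) a two-sided ideal of the path algebra generated
by paths: a set of paths closed under pre- and post-composition with arbitrary paths. -/
def IsPathIdeal (Q : FinQuiver n) (Idl : ∀ ⦃i j : QVert Q⦄, Quiver.Path i j → Prop) : Prop :=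
  ∀ ⦃i j a b : QVert Q⦄ (u : Quiver.Path a i) (p : Quiver.Path i j) (v : Quiver.Path j b),
    Idl p → Idl ((u.comp p).comp v)

/-- The ideal `Idl` is admissible: it contains all sufficiently long paths and consists of
paths of length at least two. -/
def IsAdmissible (Q : FinQuiver n) (Idl : ∀ ⦃i j : QVert Q⦄, Quiver.Path i j → Prop) : Prop :=
  (∃ N : ℕ, ∀ ⦃i j : QVert Q⦄ (p : Quiver.Path i j), N ≤ p.length → Idl p) ∧
  (∀ ⦃i j : QVert Q⦄ (p : Quiver.Path i j), Idl p → 2 ≤ p.length)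

/-- `p` belongs to the canonical generating set `G` of the monomial ideal `Idl`:
`p` lies in `Idl` and is of minimal length, i.e. no proper factor of `p` lies in `Idl`. -/
def IsMinimalRel {Q : FinQuiver n} (Idl : ∀ ⦃i j : QVert Q⦄, Quiver.Path i j → Prop)
    {i j : QVert Q} (p : Quiver.Path i j) : Prop :=
  Idl p ∧ ∀ ⦃a b : QVert Q⦄ (u : Quiver.Path i a) (g : Quiver.Path a b)
    (v : Quiver.Path b j), p = (u.comp g).comp v → Idl g →
      u.length = 0 ∧ v.length = 0

/-- `π^k_{i j}`: the number of paths from `i` to `j` in the full subquiver `Q_{≤ k}`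
which do not lie in the ideal. -/
noncomputable def pathCountLe (Q : FinQuiver n)
    (Idl : ∀ ⦃i j : QVert Q⦄, Quiver.Path i j → Prop) (k i j : QVert Q) : ℕ :=
  Nat.card {p : Quiver.Path i j // (∀ v ∈ pathVerts p, v ≤ k) ∧ ¬ Idl p}

/-- `π^n_{i j}`: the number of paths from `i` to `j` in `Q` which do not lie in the ideal. -/
noncomputable def pathCount (Q : FinQuiver n)
    (Idl : ∀ ⦃i j : QVert Q⦄, Quiver.Path i j → Prop) (i j : QVert Q) : ℕ :=
  Nat.card {p : Quiver.Path i j // ¬ Idl p}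


section Lemmas

open Quiver

/-- Two factorizations of a path with comparable tails. -/
theorem comp_eq_comp {V : Type*} [Quiver V] {i m : V} (p : Quiver.Path i m) :
    ∀ {k : V} (q : Quiver.Path m k) {m' : V} (r : Quiver.Path i m') (s : Quiver.Path m' k),
    p.comp q = r.comp s → s.length ≤ q.length →
    ∃ w : Quiver.Path m m', r = p.comp w ∧ q = w.comp s := by
  intro k q
  induction q with
  | nil =>
    intro m' r s h hle
    have h0 : s.length = 0 := Nat.le_zero.mp hle
    have hm : m' = m := Quiver.Path.eq_of_length_zero s h0
    subst hm
    have hs : s = Quiver.Path.nil := Quiver.Path.eq_nil_of_length_zero s h0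
    subst hs
    refine ⟨Quiver.Path.nil, ?_, by simp⟩
    simpa using h.symm
  | cons q' e ih =>
    intro m' r s h hle
    cases s with
    | nil =>
      refine ⟨q'.cons e, ?_, by simp⟩
      simpa using h.symm
    | cons s' e' =>
      rw [Quiver.Path.comp_cons, Quiver.Path.comp_cons] at h
      have hobj := Quiver.Path.obj_eq_of_cons_eq_cons h
      subst hobj
      have h1 : p.comp q' = r.comp s' := eq_of_heq (Quiver.Path.heq_of_cons_eq_cons h)
      have h2 : e = e' := eq_of_heq (Quiver.Path.hom_heq_of_cons_eq_cons h)
      subst h2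
      obtain ⟨w, hw1, hw2⟩ := ih r s' h1 (by simpa using hle)
      exact ⟨w, hw1, by rw [Quiver.Path.comp_cons, hw2]⟩

variable {Q : FinQuiver n}

lemma exists_pathVerts_cons {i j : QVert Q} (p : Quiver.Path i j) :
    ∃ l, pathVerts p = i :: l := by
  induction p with
  | nil => exact ⟨[], rfl⟩
  | @cons b c p e ih =>
    obtain ⟨l, hl⟩ := ih
    exact ⟨l ++ [c], by simp [pathVerts, hl]⟩

lemma end_mem_pathVerts {i j : QVert Q} (p : Quiver.Path i j) : j ∈ pathVerts p := by
  cases p with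
  | nil => simp [pathVerts]
  | cons p e => simp [pathVerts]

lemma start_mem_pathVerts {i j : QVert Q} (p : Quiver.Path i j) : i ∈ pathVerts p := by
  obtain ⟨l, hl⟩ := exists_pathVerts_cons p
  simp [hl]

lemma pathVerts_comp {i m k : QVert Q} (p : Quiver.Path i m) (q : Quiver.Path m k) :
    pathVerts (p.comp q) = pathVerts p ++ (pathVerts q).drop 1 := by
  induction q with
  | nil => simp [pathVerts]
  | cons q' e ih =>
    obtain ⟨l, hl⟩ := exists_pathVerts_cons q'
    simp only [Quiver.Path.comp_cons, pathVerts, ih, hl]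
    simp

lemma mem_pathVerts_comp {i m k : QVert Q} {p : Quiver.Path i m} {q : Quiver.Path m k}
    {v : QVert Q} : v ∈ pathVerts (p.comp q) ↔ v ∈ pathVerts p ∨ v ∈ pathVerts q := by
  rw [pathVerts_comp, List.mem_append]
  constructor
  · rintro (h | h)
    · exact Or.inl h
    · exact Or.inr (List.mem_of_mem_drop h)
  · rintro (h | h)
    · exact Or.inl h
    · obtain ⟨l, hl⟩ := exists_pathVerts_cons q
      rw [hl] at h ⊢
      rcases List.mem_cons.mp h with h | h
      · exact Or.inl (h ▸ end_mem_pathVerts p)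
      · exact Or.inr (by simpa using h)

lemma splitAtMem {i j : QVert Q} (p : Quiver.Path i j) {v : QVert Q}
    (h : v ∈ (pathVerts p).drop 1) :
    ∃ (p1 : Quiver.Path i v) (p2 : Quiver.Path v j),
      p = p1.comp p2 ∧ 1 ≤ p1.length := by
  induction p with
  | nil => simp [pathVerts] at h
  | @cons b c p' e ih =>
    obtain ⟨l, hl⟩ := exists_pathVerts_cons p'
    simp only [pathVerts, hl] at h
    have h' : v ∈ l ∨ v = c := by simpa using h
    rcases h' with h' | h'
    · obtain ⟨p1, p2, hp, hlen⟩ := ih (by simp [hl]; exact h')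
      exact ⟨p1, p2.cons e, by rw [hp, Quiver.Path.comp_cons], hlen⟩
    · subst h'
      exact ⟨p'.cons e, Quiver.Path.nil, by simp, by simp [Quiver.Path.length_cons]⟩

lemma internalVerts_cons {i b j : QVert Q} (p : Quiver.Path i b) (e : b ⟶ j) :
    internalVerts (p.cons e) = (pathVerts p).drop 1 := by
  obtain ⟨l, hl⟩ := exists_pathVerts_cons p
  simp [internalVerts, pathVerts, hl]

lemma mem_internal_split {i j : QVert Q} (p : Quiver.Path i j) {v : QVert Q}
    (h : v ∈ internalVerts p) :
    ∃ (p1 : Quiver.Path i v) (p2 : Quiver.Path v j),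
      p = p1.comp p2 ∧ 1 ≤ p1.length ∧ 1 ≤ p2.length := by
  cases p with
  | nil => simp [internalVerts, pathVerts] at h
  | cons p' e =>
    rw [internalVerts_cons] at h
    obtain ⟨p1, p2, hp, hlen⟩ := splitAtMem p' h
    exact ⟨p1, p2.cons e, by rw [hp, Quiver.Path.comp_cons],
      hlen, by simp [Quiver.Path.length_cons]⟩

lemma mem_internalVerts_comp {i m j : QVert Q} (p1 : Quiver.Path i m) (p2 : Quiver.Path m j)
    (h1 : 1 ≤ p1.length) (h2 : 1 ≤ p2.length) :
    m ∈ internalVerts (p1.comp p2) := by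
  cases p2 with
  | nil => simp at h2
  | cons p2' e =>
    rw [Quiver.Path.comp_cons, internalVerts_cons, pathVerts_comp]
    cases p1 with
    | nil => simp at h1
    | cons p1' e' =>
      obtain ⟨l1, hl1⟩ := exists_pathVerts_cons p1'
      simp [pathVerts, hl1]

/-- `g` is a (not necessarily proper) factor of `p`. -/
def PathFactor {Q : FinQuiver n} {a b i j : QVert Q} (g : Quiver.Path a b)
    (p : Quiver.Path i j) : Prop :=
  ∃ (u : Quiver.Path i a) (v : Quiver.Path b j), p = (u.comp g).comp v

lemma PathFactor.refl {i j : QVert Q} (p : Quiver.Path i j) : PathFactor p p :=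
  ⟨Quiver.Path.nil, Quiver.Path.nil, by simp⟩

variable {Idl : ∀ ⦃i j : QVert Q⦄, Quiver.Path i j → Prop}

lemma idl_of_factor (hIdl : IsPathIdeal Q Idl) {a b i j : QVert Q} {g : Quiver.Path a b}
    {p : Quiver.Path i j} (hf : PathFactor g p) (hg : Idl g) : Idl p := by
  obtain ⟨u, v, rfl⟩ := hf
  exact hIdl u g v hg

lemma not_idl_of_factor (hIdl : IsPathIdeal Q Idl) {a b i j : QVert Q} {g : Quiver.Path a b}
    {p : Quiver.Path i j} (hp : ¬ Idl p) (hf : PathFactor g p) : ¬ Idl g :=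
  fun hg => hp (idl_of_factor hIdl hf hg)

lemma PathFactor.trans {a b c d i j : QVert Q} {g : Quiver.Path a b} {h : Quiver.Path c d}
    {p : Quiver.Path i j} (h1 : PathFactor g h) (h2 : PathFactor h p) : PathFactor g p := by
  obtain ⟨u, v, rfl⟩ := h1
  obtain ⟨u', v', rfl⟩ := h2
  exact ⟨u'.comp u, v.comp v', by simp [Quiver.Path.comp_assoc]⟩

lemma verts_subset_of_factor {a b i j : QVert Q} {g : Quiver.Path a b}
    {p : Quiver.Path i j} (hf : PathFactor g p) {v : QVert Q} (hv : v ∈ pathVerts g) :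
    v ∈ pathVerts p := by
  obtain ⟨u, w, rfl⟩ := hf
  exact mem_pathVerts_comp.mpr (Or.inl (mem_pathVerts_comp.mpr (Or.inr hv)))

lemma exists_minimalRel_factor (hIdl : IsPathIdeal Q Idl) {i j : QVert Q}
    (p : Quiver.Path i j) (hp : Idl p) :
    ∃ (a b : QVert Q) (g : Quiver.Path a b), IsMinimalRel Idl g ∧ PathFactor g p := by
  suffices H : ∀ (N : ℕ) {i j : QVert Q} (p : Quiver.Path i j), p.length ≤ N → Idl p →
      ∃ (a b : QVert Q) (g : Quiver.Path a b), IsMinimalRel Idl g ∧ PathFactor g p from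
    H p.length p le_rfl hp
  intro N
  induction N with
  | zero =>
    intro i j p hl hp
    by_cases hmin : IsMinimalRel Idl p
    · exact ⟨i, j, p, hmin, PathFactor.refl p⟩
    · exfalso
      rw [IsMinimalRel, not_and] at hmin
      push_neg at hmin
      obtain ⟨a, b, u, g, v, heq, hg, hne⟩ := hmin hp
      have : p.length = u.length + g.length + v.length := by
        rw [heq, Quiver.Path.length_comp, Quiver.Path.length_comp]
      omega
  | succ N ih =>
    intro i j p hl hp
    by_cases hmin : IsMinimalRel Idl p
    · exact ⟨i, j, p, hmin, PathFactor.refl p⟩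
    · rw [IsMinimalRel, not_and] at hmin
      push_neg at hmin
      obtain ⟨a, b, u, g, v, heq, hg, hne⟩ := hmin hp
      have hlen : p.length = u.length + g.length + v.length := by
        rw [heq, Quiver.Path.length_comp, Quiver.Path.length_comp]
      obtain ⟨a', b', g', hmin', hf'⟩ := ih g (by omega) hg
      exact ⟨a', b', g', hmin', hf'.trans ⟨u, v, heq⟩⟩

lemma factor_of_comp {x y i m k : QVert Q} {g : Quiver.Path x y} {u : Quiver.Path i m}
    {v : Quiver.Path m k} (h : PathFactor g (u.comp v)) :
    PathFactor g u ∨ PathFactor g v ∨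
      ∃ (g1 : Quiver.Path x m) (g2 : Quiver.Path m y),
        g = g1.comp g2 ∧ 1 ≤ g1.length ∧ 1 ≤ g2.length := by
  obtain ⟨a, b, hab⟩ := h
  rcases le_total b.length v.length with hbv | hvb
  · obtain ⟨w, hw1, hw2⟩ := comp_eq_comp u v (a.comp g) b hab hbv
    rcases le_total w.length g.length with hwg | hgw
    · obtain ⟨ω, hu, hg⟩ := comp_eq_comp a g u w hw1 hwg
      by_cases hω : ω.length = 0
      · have hx : x = m := Quiver.Path.eq_of_length_zero ω hω
        subst hx
        have : ω = Quiver.Path.nil := Quiver.Path.eq_nil_of_length_zero ω hω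
        subst this
        rw [Quiver.Path.nil_comp] at hg
        subst hg
        exact Or.inr (Or.inl ⟨Quiver.Path.nil, b, by rw [hw2]; simp⟩)
      · by_cases hw0 : w.length = 0
        · have hy : m = y := Quiver.Path.eq_of_length_zero w hw0
          subst hy
          have : w = Quiver.Path.nil := Quiver.Path.eq_nil_of_length_zero w hw0
          subst this
          rw [Quiver.Path.comp_nil] at hg
          subst hg
          exact Or.inl ⟨a, Quiver.Path.nil, by rw [hu]; simp⟩
        · exact Or.inr (Or.inr ⟨ω, w, hg, by omega, by omega⟩)
    · obtain ⟨ω, ha, hw⟩ := comp_eq_comp u w a g hw1.symm hgw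
      exact Or.inr (Or.inl ⟨ω, b, by rw [hw2, hw, Quiver.Path.comp_assoc]⟩)
  · obtain ⟨w, hw1, hw2⟩ := comp_eq_comp (a.comp g) b u v hab.symm hvb
    exact Or.inl ⟨a, w, hw1⟩

end Lemmas


/-- Green–Schroll's criterion: all maximal vertices of every path in the canonical
generating set `G` are external, i.e. no internal vertex of a minimal relation is
maximal among the vertices of that relation. -/
def GreenSchrollCondition (Q : FinQuiver n)
    (Idl : ∀ ⦃i j : QVert Q⦄, Quiver.Path i j → Prop) : Prop :=
  ∀ ⦃i j : QVert Q⦄ (p : Quiver.Path i j), IsMinimalRel Idl p →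
    ∀ v ∈ internalVerts p, ∃ w ∈ pathVerts p, v < w

/-- The numerical path-count criterion: `π^i_{i i} = 1` for each vertex `i`, and
`π^n_{i k} = ∑_j π^j_{i j} · π^j_{j k}` for all vertices `i, k`. -/
def PathCountCondition (Q : FinQuiver n)
    (Idl : ∀ ⦃i j : QVert Q⦄, Quiver.Path i j → Prop) : Prop :=
  (∀ i : QVert Q, pathCountLe Q Idl i i i = 1) ∧
  (∀ i k : QVert Q, pathCount Q Idl i k =
    ∑ j : QVert Q, pathCountLe Q Idl j i j * pathCountLe Q Idl j j k)


section Lemmas2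

variable {Q : FinQuiver n} {Idl : ∀ ⦃i j : QVert Q⦄, Quiver.Path i j → Prop}

lemma not_idl_nil (hadm : IsAdmissible Q Idl) (i : QVert Q) :
    ¬ Idl (Quiver.Path.nil : Quiver.Path i i) := fun h => by
  have := hadm.2 _ h
  simp at this

lemma no_internal_max (hGS : GreenSchrollCondition Q Idl) {x y : QVert Q}
    {g : Quiver.Path x y} (hg : IsMinimalRel Idl g) {m : QVert Q}
    (hm : m ∈ internalVerts g) (hall : ∀ v ∈ pathVerts g, v ≤ m) : False := by
  obtain ⟨w, hw, hlt⟩ := hGS g hg m hm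
  exact absurd (hall w hw) (not_le.mpr hlt)

lemma comp_not_idl (hIdl : IsPathIdeal Q Idl) (hGS : GreenSchrollCondition Q Idl)
    {i m k : QVert Q} {u : Quiver.Path i m} {v : Quiver.Path m k}
    (hu : ¬ Idl u) (hv : ¬ Idl v)
    (hub : ∀ w ∈ pathVerts u, w ≤ m) (hvb : ∀ w ∈ pathVerts v, w ≤ m) :
    ¬ Idl (u.comp v) := by
  intro hI
  obtain ⟨a, b, g, hgmin, hgf⟩ := exists_minimalRel_factor hIdl _ hI
  rcases factor_of_comp hgf with hf | hf | ⟨g1, g2, hg, h1, h2⟩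
  · exact hu (idl_of_factor hIdl hf hgmin.1)
  · exact hv (idl_of_factor hIdl hf hgmin.1)
  · have hmint : m ∈ internalVerts g := hg ▸ mem_internalVerts_comp g1 g2 h1 h2
    have hsub : ∀ w ∈ pathVerts g, w ≤ m := fun w hw => by
      rcases mem_pathVerts_comp.mp (verts_subset_of_factor hgf hw) with h | h
      · exact hub w h
      · exact hvb w h
    exact no_internal_max hGS hgmin hmint hsub

/-- Powers of a cyclic path. -/
def cpow {Q : FinQuiver n} {i : QVert Q} (c : Quiver.Path i i) : ℕ → Quiver.Path i i
  | 0 => Quiver.Path.nil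
  | m + 1 => (cpow c m).comp c

lemma cpow_length {i : QVert Q} (c : Quiver.Path i i) (m : ℕ) :
    (cpow c m).length = m * c.length := by
  induction m with
  | zero => simp [cpow]
  | succ m ih => simp [cpow, Quiver.Path.length_comp, ih]; ring

lemma cpow_verts {i : QVert Q} {c : Quiver.Path i i} (hc : ∀ v ∈ pathVerts c, v ≤ i)
    (m : ℕ) : ∀ v ∈ pathVerts (cpow c m), v ≤ i := by
  induction m with
  | zero => intro v hv; simp [cpow, pathVerts] at hv; simp [hv]
  | succ m ih =>
    intro v hv
    rcases mem_pathVerts_comp.mp hv with h | h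
    · exact ih v h
    · exact hc v h

lemma cpow_not_idl (hIdl : IsPathIdeal Q Idl) (hadm : IsAdmissible Q Idl)
    (hGS : GreenSchrollCondition Q Idl) {i : QVert Q} {c : Quiver.Path i i}
    (hc : ¬ Idl c) (hbd : ∀ v ∈ pathVerts c, v ≤ i) (m : ℕ) : ¬ Idl (cpow c m) := by
  induction m with
  | zero => exact not_idl_nil hadm i
  | succ m ih =>
    exact comp_not_idl hIdl hGS ih hc (cpow_verts hbd m) hbd

lemma cycle_nil_of_GS (hIdl : IsPathIdeal Q Idl) (hadm : IsAdmissible Q Idl)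
    (hGS : GreenSchrollCondition Q Idl) {i : QVert Q} (c : Quiver.Path i i)
    (hbd : ∀ v ∈ pathVerts c, v ≤ i) (hc : ¬ Idl c) : c = Quiver.Path.nil := by
  by_contra hne
  have hlen : 1 ≤ c.length := by
    rcases Nat.eq_zero_or_pos c.length with h | h
    · exact absurd (Quiver.Path.eq_nil_of_length_zero c h) hne
    · exact h
  obtain ⟨N, hN⟩ := hadm.1
  have : Idl (cpow c N) := hN _ (by rw [cpow_length]; exact Nat.le_mul_of_pos_right N hlen)
  exact cpow_not_idl hIdl hadm hGS hc hbd N this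

/-- The list of arrows of a path, as elements of the total arrow type. -/
def arrList {Q : FinQuiver n} {i : QVert Q} :
    ∀ {j : QVert Q}, Quiver.Path i j → List (Σ a b : QVert Q, Q.Arr a b)
  | _, Quiver.Path.nil => []
  | _, @Quiver.Path.cons _ _ _ b c p e => ⟨b, c, e⟩ :: arrList p

lemma arrList_injective {i : QVert Q} :
    ∀ {j : QVert Q} (p q : Quiver.Path i j), arrList p = arrList q → p = q
  | _, Quiver.Path.nil, Quiver.Path.nil, _ => rfl
  | _, Quiver.Path.nil, Quiver.Path.cons q f, h => by simp [arrList] at h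
  | _, Quiver.Path.cons p e, Quiver.Path.nil, h => by simp [arrList] at h
  | _, Quiver.Path.cons p e, Quiver.Path.cons q f, h => by
    simp only [arrList, List.cons.injEq] at h
    obtain ⟨h1, h2⟩ := h
    injection h1 with hb h1
    subst hb
    have h1 := eq_of_heq h1
    injection h1 with h0 h1
    subst h1
    rw [arrList_injective p q h2]

lemma arrList_length {i : QVert Q} : ∀ {j : QVert Q} (p : Quiver.Path i j),
    (arrList p).length = p.length
  | _, Quiver.Path.nil => rfl
  | _, Quiver.Path.cons p e => by
    simp [arrList, Quiver.Path.length_cons, arrList_length p]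

lemma finite_path_subtype (hadm : IsAdmissible Q Idl) {i j : QVert Q}
    (S : Quiver.Path i j → Prop) (hS : ∀ p, S p → ¬ Idl p) :
    Finite {p : Quiver.Path i j // S p} := by
  obtain ⟨N, hN⟩ := hadm.1
  haveI : ∀ a b : QVert Q, Finite (Q.Arr a b) := Q.finite
  haveI : Finite (QVert Q) := Finite.of_fintype _
  haveI : ∀ a : QVert Q, Finite (Σ b : QVert Q, Q.Arr a b) := fun a => by
    haveI : ∀ b : Fin n, Finite (Q.Arr a b) := fun b => Q.finite a b
    exact (inferInstance : Finite (Σ b : Fin n, Q.Arr a b))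
  have hfin : {l : List (Σ a b : QVert Q, Q.Arr a b) | l.length ≤ N}.Finite :=
    List.finite_length_le _ N
  haveI : Finite {l : List (Σ a b : QVert Q, Q.Arr a b) // l.length ≤ N} := hfin.to_subtype
  refine Finite.of_injective
    (fun p : {p : Quiver.Path i j // S p} =>
      (⟨arrList p.1, ?_⟩ : {l : List (Σ a b : QVert Q, Q.Arr a b) // l.length ≤ N})) ?_
  · rw [arrList_length]
    by_contra hlt
    exact hS p.1 p.2 (hN _ (le_of_not_ge hlt))
  · intro p q h
    exact Subtype.ext (arrList_injective _ _ (congrArg Subtype.val h))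

lemma list_exists_max {α : Type*} [LinearOrder α] :
    ∀ (l : List α), l ≠ [] → ∃ j ∈ l, ∀ v ∈ l, v ≤ j := by
  intro l
  induction l with
  | nil => intro h; exact absurd rfl h
  | cons a l ih =>
    intro _
    cases l with
    | nil => exact ⟨a, by simp⟩
    | cons b t =>
      obtain ⟨j, hj, hmax⟩ := ih (by simp)
      rcases le_total a j with h | h
      · exact ⟨j, List.mem_cons_of_mem a hj, by
          intro v hv
          rcases List.mem_cons.mp hv with rfl | hv
          · exact h
          · exact hmax v hv⟩
      · exact ⟨a, List.mem_cons_self, by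
          intro v hv
          rcases List.mem_cons.mp hv with rfl | hv
          · exact le_rfl
          · exact le_trans (hmax v hv) h⟩

lemma exists_split (hIdl : IsPathIdeal Q Idl) (hadm : IsAdmissible Q Idl)
    {i k : QVert Q} (p : Quiver.Path i k) (hp : ¬ Idl p) :
    ∃ (j : QVert Q) (u : Quiver.Path i j) (v : Quiver.Path j k),
      p = u.comp v ∧ (∀ w ∈ pathVerts u, w ≤ j) ∧ (∀ w ∈ pathVerts v, w ≤ j) ∧
        ¬ Idl u ∧ ¬ Idl v := by
  obtain ⟨l, hl⟩ := exists_pathVerts_cons p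
  obtain ⟨j, hjmem, hjmax⟩ := list_exists_max (pathVerts p) (by rw [hl]; simp)
  rw [hl] at hjmem
  rcases List.mem_cons.mp hjmem with rfl | hjl
  · refine ⟨j, Quiver.Path.nil, p, by simp, ?_, ?_, not_idl_nil hadm j, hp⟩
    · intro w hw; simp [pathVerts] at hw; simp [hw]
    · exact hjmax
  · have : j ∈ (pathVerts p).drop 1 := by rw [hl]; simpa using hjl
    obtain ⟨p1, p2, hpeq, hlen⟩ := splitAtMem p this
    refine ⟨j, p1, p2, hpeq, ?_, ?_, ?_, ?_⟩
    · intro w hw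
      exact hjmax w (hpeq ▸ mem_pathVerts_comp.mpr (Or.inl hw))
    · intro w hw
      exact hjmax w (hpeq ▸ mem_pathVerts_comp.mpr (Or.inr hw))
    · exact not_idl_of_factor hIdl hp ⟨Quiver.Path.nil, p2, by simp [hpeq]⟩
    · exact not_idl_of_factor hIdl hp ⟨p1, Quiver.Path.nil, by simp [hpeq]⟩

lemma split_inj (hIdl : IsPathIdeal Q Idl)
    (Hcyc : ∀ (j : QVert Q) (c : Quiver.Path j j),
      (∀ v ∈ pathVerts c, v ≤ j) → ¬ Idl c → c = Quiver.Path.nil)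
    {i j k : QVert Q} {u u' : Quiver.Path i j} {v v' : Quiver.Path j k}
    (hu'b : ∀ w ∈ pathVerts u', w ≤ j) (hu' : ¬ Idl u')
    (h : u.comp v = u'.comp v') (hle : v'.length ≤ v.length) : u = u' ∧ v = v' := by
  obtain ⟨w, hw1, hw2⟩ := comp_eq_comp u v u' v' h hle
  have hwb : ∀ x ∈ pathVerts w, x ≤ j := fun x hx =>
    hu'b x (hw1 ▸ mem_pathVerts_comp.mpr (Or.inr hx))
  have hwn : ¬ Idl w := not_idl_of_factor hIdl hu' ⟨u, Quiver.Path.nil, by simp [hw1]⟩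
  have : w = Quiver.Path.nil := Hcyc j w hwb hwn
  subst this
  rw [Quiver.Path.comp_nil] at hw1
  rw [Quiver.Path.nil_comp] at hw2
  exact ⟨hw1.symm, hw2⟩

lemma card_sigma' {ι : Type*} [Fintype ι] (α : ι → Type*) [∀ i, Finite (α i)] :
    Nat.card (Σ i, α i) = ∑ i, Nat.card (α i) := by
  haveI := fun i => Fintype.ofFinite (α i)
  simp [Nat.card_eq_fintype_card, Fintype.card_sigma]

end Lemmas2

/-- **Lemma.** For an admissible monomial ideal `Idl` of a finite loopless quiver, the
numerical path-count condition `π^i_{ii} = 1 ∧ π^n_{ik} = ∑_j π^j_{ij} π^j_{jk}` holds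
if and only if all maximal vertices of every path in the canonical generating set `G`
are external. -/
theorem pathCountCondition_iff_greenSchroll (Q : FinQuiver n)
    (Idl : ∀ ⦃i j : QVert Q⦄, Quiver.Path i j → Prop)
    (hIdl : IsPathIdeal Q Idl) (hadm : IsAdmissible Q Idl) :
    PathCountCondition Q Idl ↔ GreenSchrollCondition Q Idl := by
  constructor
  · rintro ⟨hpi1, hpi2⟩
    have Hcyc : ∀ (j : QVert Q) (c : Quiver.Path j j),
        (∀ v ∈ pathVerts c, v ≤ j) → ¬ Idl c → c = Quiver.Path.nil := by
      intro j c hb hc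
      have h1 : Nat.card {p : Quiver.Path j j //
          (∀ v ∈ pathVerts p, v ≤ j) ∧ ¬ Idl p} = 1 := hpi1 j
      rw [Nat.card_eq_one_iff_unique] at h1
      have := h1.1.allEq
        (⟨c, hb, hc⟩ : {p : Quiver.Path j j // (∀ v ∈ pathVerts p, v ≤ j) ∧ ¬ Idl p})
        ⟨Quiver.Path.nil, fun v hv => by simp [pathVerts] at hv; simp [hv],
          not_idl_nil hadm j⟩
      exact congrArg Subtype.val this
    intro a b g hgmin m hm
    by_contra hcon
    push_neg at hcon
    have hall : ∀ w ∈ pathVerts g, w ≤ m := hcon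
    obtain ⟨u₀, v₀, hg₀, hl1, hl2⟩ := mem_internal_split g hm
    have hu₀ : ¬ Idl u₀ := by
      intro hI
      have h := hgmin.2 Quiver.Path.nil u₀ v₀ (by simp [hg₀]) hI
      have := h.2
      omega
    have hv₀ : ¬ Idl v₀ := by
      intro hI
      have h := hgmin.2 u₀ v₀ Quiver.Path.nil (by simp [hg₀]) hI
      have := h.1
      omega
    have hu₀b : ∀ w ∈ pathVerts u₀, w ≤ m := fun w hw =>
      hall w (hg₀ ▸ mem_pathVerts_comp.mpr (Or.inl hw))
    have hv₀b : ∀ w ∈ pathVerts v₀, w ≤ m := fun w hw =>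
      hall w (hg₀ ▸ mem_pathVerts_comp.mpr (Or.inr hw))
    haveI hfA : Finite {p : Quiver.Path a b // ¬ Idl p} :=
      finite_path_subtype hadm _ (fun _ h => h)
    haveI hf1 : ∀ j : QVert Q,
        Finite {u : Quiver.Path a j // (∀ w ∈ pathVerts u, w ≤ j) ∧ ¬ Idl u} :=
      fun j => finite_path_subtype hadm _ (fun _ h => h.2)
    haveI hf2 : ∀ j : QVert Q,
        Finite {v : Quiver.Path j b // (∀ w ∈ pathVerts v, w ≤ j) ∧ ¬ Idl v} :=
      fun j => finite_path_subtype hadm _ (fun _ h => h.2)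
    have hsplit := fun (p : {p : Quiver.Path a b // ¬ Idl p}) =>
      exists_split hIdl hadm p.1 p.2
    choose jf uf vf hfeq hfub hfvb hfu hfv using hsplit
    let B := Σ j : QVert Q,
      ({u : Quiver.Path a j // (∀ w ∈ pathVerts u, w ≤ j) ∧ ¬ Idl u} ×
       {v : Quiver.Path j b // (∀ w ∈ pathVerts v, w ≤ j) ∧ ¬ Idl v})
    let f : Option {p : Quiver.Path a b // ¬ Idl p} → B :=
      fun o => o.elim ⟨m, ⟨u₀, hu₀b, hu₀⟩, ⟨v₀, hv₀b, hv₀⟩⟩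
        (fun p => ⟨jf p, ⟨uf p, hfub p, hfu p⟩, ⟨vf p, hfvb p, hfv p⟩⟩)
    let φ : B → Quiver.Path a b := fun x => x.2.1.1.comp x.2.2.1
    have hφf : ∀ p, φ (f (some p)) = p.1 := fun p => (hfeq p).symm
    have hφn : φ (f none) = g := hg₀.symm
    have hinj : Function.Injective f := by
      intro o o' h
      match o, o' with
      | none, none => rfl
      | none, some p =>
        exfalso
        have h' := congrArg φ h
        rw [hφn, hφf] at h'
        exact p.2 (h' ▸ hgmin.1)
      | some p, none =>
        exfalso
        have h' := congrArg φ h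
        rw [hφn, hφf] at h'
        exact p.2 (h'.symm ▸ hgmin.1)
      | some p, some q =>
        have h' := congrArg φ h
        rw [hφf, hφf] at h'
        exact congrArg some (Subtype.ext h')
    have hcard := Nat.card_le_card_of_injective f hinj
    rw [Finite.card_option] at hcard
    have hsum : Nat.card B =
        ∑ j : QVert Q, pathCountLe Q Idl j a j * pathCountLe Q Idl j j b := by
      rw [card_sigma']
      exact Finset.sum_congr rfl fun j _ => Nat.card_prod _ _
    have h2 : Nat.card {p : Quiver.Path a b // ¬ Idl p} =
        ∑ j : QVert Q, pathCountLe Q Idl j a j * pathCountLe Q Idl j j b := hpi2 a b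
    omega
  · intro hGS
    have Hcyc : ∀ (j : QVert Q) (c : Quiver.Path j j),
        (∀ v ∈ pathVerts c, v ≤ j) → ¬ Idl c → c = Quiver.Path.nil :=
      fun j c hb hc => cycle_nil_of_GS hIdl hadm hGS c hb hc
    constructor
    · intro i
      have : Nat.card {p : Quiver.Path i i //
          (∀ v ∈ pathVerts p, v ≤ i) ∧ ¬ Idl p} = 1 := by
        rw [Nat.card_eq_one_iff_unique]
        refine ⟨⟨fun x y => ?_⟩,
          ⟨⟨Quiver.Path.nil, fun v hv => by simp [pathVerts] at hv; simp [hv],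
            not_idl_nil hadm i⟩⟩⟩
        obtain ⟨c, hb, hc⟩ := x
        obtain ⟨c', hb', hc'⟩ := y
        exact Subtype.ext ((Hcyc i c hb hc).trans (Hcyc i c' hb' hc').symm)
      exact this
    · intro i k
      haveI hf1 : ∀ j : QVert Q,
          Finite {u : Quiver.Path i j // (∀ w ∈ pathVerts u, w ≤ j) ∧ ¬ Idl u} :=
        fun j => finite_path_subtype hadm _ (fun _ h => h.2)
      haveI hf2 : ∀ j : QVert Q,
          Finite {v : Quiver.Path j k // (∀ w ∈ pathVerts v, w ≤ j) ∧ ¬ Idl v} :=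
        fun j => finite_path_subtype hadm _ (fun _ h => h.2)
      let B := Σ j : QVert Q,
        ({u : Quiver.Path i j // (∀ w ∈ pathVerts u, w ≤ j) ∧ ¬ Idl u} ×
         {v : Quiver.Path j k // (∀ w ∈ pathVerts v, w ≤ j) ∧ ¬ Idl v})
      let φ : B → {p : Quiver.Path i k // ¬ Idl p} := fun x =>
        ⟨x.2.1.1.comp x.2.2.1,
          comp_not_idl hIdl hGS x.2.1.2.2 x.2.2.2.2 x.2.1.2.1 x.2.2.2.1⟩
      have hbij : Function.Bijective φ := by
        constructor
        · rintro ⟨j, ⟨u, hub, hu⟩, ⟨v, hvb, hv⟩⟩ ⟨j', ⟨u', hub', hu'⟩, ⟨v', hvb', hv'⟩⟩ hE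
          have h : u.comp v = u'.comp v' := congrArg Subtype.val hE
          have hj1 : j ≤ j' := by
            have hjm : j ∈ pathVerts (u'.comp v') :=
              h ▸ mem_pathVerts_comp.mpr (Or.inl (end_mem_pathVerts u))
            rcases mem_pathVerts_comp.mp hjm with hx | hx
            · exact hub' j hx
            · exact hvb' j hx
          have hj2 : j' ≤ j := by
            have hjm : j' ∈ pathVerts (u.comp v) :=
              h ▸ mem_pathVerts_comp.mpr (Or.inl (end_mem_pathVerts u'))
            rcases mem_pathVerts_comp.mp hjm with hx | hx
            · exact hub j' hx
            · exact hvb j' hx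
          have hjj : j = j' := le_antisymm hj1 hj2
          subst hjj
          rcases le_total v'.length v.length with hle | hle
          · obtain ⟨h1, h2⟩ := split_inj hIdl Hcyc hub' hu' h hle
            subst h1
            subst h2
            rfl
          · obtain ⟨h1, h2⟩ := split_inj hIdl Hcyc hub hu h.symm hle
            subst h1
            subst h2
            rfl
        · rintro ⟨p, hp⟩
          obtain ⟨j, u, v, hpeq, hub, hvb, hu, hv⟩ := exists_split hIdl hadm p hp
          exact ⟨⟨j, ⟨u, hub, hu⟩, ⟨v, hvb, hv⟩⟩, Subtype.ext hpeq.symm⟩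
      calc pathCount Q Idl i k = Nat.card B := (Nat.card_eq_of_bijective φ hbij).symm
        _ = ∑ j : QVert Q, pathCountLe Q Idl j i j * pathCountLe Q Idl j j k := by
            rw [card_sigma']
            exact Finset.sum_congr rfl fun j _ => Nat.card_prod _ _

end HWPaper
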